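/- Among all orthogonal matrices Ω ∈ ℝ^{m×m}, the quantity ‖F - Ω G‖_F² is minimized when trace(Ωᵀ F Gᵀ) is maximized; in particular, if F Gᵀ = X Σ Yᵀ is an SVD, then Ω* = X Yᵀ is a minimizer of ‖F - Ω G‖_F over orthogonal Ω (the orthogonal Procrustes problem). -/
import Mathlib

open Matrix

/-- Squared Frobenius norm of a real matrix. -/
def frobSq {m n : ℕ} (A : Matrix (Fin m) (Fin n) ℝ) : ℝ :=
  ∑ i, ∑ j, (A i j) ^ 2

lemma frobSq_eq_trace {m n : ℕ} (A : Matrix (Fin m) (Fin n) ℝ) :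
    frobSq A = (Aᵀ * A).trace := by
  simp only [frobSq, Matrix.trace, Matrix.diag, Matrix.mul_apply, Matrix.transpose_apply, sq]
  exact Finset.sum_comm

lemma expand_frob {m n : ℕ} (F G : Matrix (Fin m) (Fin n) ℝ)
    (Ω : Matrix (Fin m) (Fin m) ℝ) (h : Ωᵀ * Ω = 1) :
    frobSq (F - Ω * G) = frobSq F + frobSq G - 2 * (Ωᵀ * (F * Gᵀ)).trace := by
  rw [frobSq_eq_trace, frobSq_eq_trace, frobSq_eq_trace]
  have hG : (Ω * G)ᵀ * (Ω * G) = Gᵀ * G := by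
    rw [transpose_mul, Matrix.mul_assoc, ← Matrix.mul_assoc Ωᵀ, h, Matrix.one_mul]
  have hE : (F - Ω * G)ᵀ * (F - Ω * G)
      = Fᵀ * F - Fᵀ * (Ω * G) - (Ω * G)ᵀ * F + Gᵀ * G := by
    rw [transpose_sub, Matrix.sub_mul, Matrix.mul_sub, Matrix.mul_sub, hG]
    abel
  rw [hE]
  have h2 : ((Ω * G)ᵀ * F).trace = (Ωᵀ * (F * Gᵀ)).trace := by
    rw [transpose_mul, Matrix.mul_assoc, Matrix.trace_mul_comm, ← Matrix.mul_assoc,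
      Matrix.mul_assoc]
  have h1 : (Fᵀ * (Ω * G)).trace = (Ωᵀ * (F * Gᵀ)).trace := by
    rw [← trace_transpose (Fᵀ * (Ω * G)), transpose_mul, transpose_transpose, ← h2]
  simp only [trace_add, trace_sub, h1, h2]
  ring

lemma trace_mul_diag_le {m : ℕ} (M S : Matrix (Fin m) (Fin m) ℝ)
    (hM : M * Mᵀ = 1) (hSdiag : ∀ i j, i ≠ j → S i j = 0)
    (hSpos : ∀ i, 0 ≤ S i i) :
    (M * S).trace ≤ S.trace := by
  have key : ∀ i, (M * S) i i ≤ S i i := by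
    intro i
    have hrow : ∑ j, M i j * M i j = 1 := by
      have := congrArg (fun A => A i i) hM
      simpa [Matrix.mul_apply, Matrix.transpose_apply, Matrix.one_apply] using this
    have hMii : M i i ≤ 1 := by
      have hle : M i i * M i i ≤ 1 := by
        rw [← hrow]
        exact Finset.single_le_sum (f := fun j => M i j * M i j)
          (fun j _ => mul_self_nonneg (M i j)) (Finset.mem_univ i)
      nlinarith
    have hd : (M * S) i i = M i i * S i i := by
      rw [Matrix.mul_apply]
      rw [Finset.sum_eq_single i]
      · intro b _ hb; rw [hSdiag b i hb, mul_zero]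
      · intro h; exact absurd (Finset.mem_univ i) h
    rw [hd]
    nlinarith [hSpos i]
  exact Finset.sum_le_sum (fun i _ => key i)

theorem procrustes_minimizer {m n : ℕ}
    (F G : Matrix (Fin m) (Fin n) ℝ)
    (X Y S : Matrix (Fin m) (Fin m) ℝ)
    (hX1 : Xᵀ * X = 1) (hX2 : X * Xᵀ = 1)
    (hY1 : Yᵀ * Y = 1) (hY2 : Y * Yᵀ = 1)
    (hSdiag : ∀ i j, i ≠ j → S i j = 0)
    (hSpos : ∀ i, 0 ≤ S i i)
    (hSVD : F * Gᵀ = X * S * Yᵀ) :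
    ∀ Ω : Matrix (Fin m) (Fin m) ℝ, Ωᵀ * Ω = 1 → Ω * Ωᵀ = 1 →
      frobSq (F - (X * Yᵀ) * G) ≤ frobSq (F - Ω * G) := by
  intro Ω hΩ1 hΩ2
  have hXY1 : (X * Yᵀ)ᵀ * (X * Yᵀ) = 1 := by
    rw [transpose_mul, transpose_transpose, Matrix.mul_assoc, ← Matrix.mul_assoc Xᵀ, hX1,
      Matrix.one_mul, hY2]
  rw [expand_frob F G Ω hΩ1, expand_frob F G (X * Yᵀ) hXY1]
  have tr_eq : ∀ Ψ : Matrix (Fin m) (Fin m) ℝ,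
      (Ψᵀ * (F * Gᵀ)).trace = ((Yᵀ * Ψᵀ * X) * S).trace := by
    intro Ψ
    rw [hSVD]
    rw [show Ψᵀ * (X * S * Yᵀ) = (Ψᵀ * X * S) * Yᵀ by noncomm_ring]
    rw [Matrix.trace_mul_comm]
    rw [show Yᵀ * (Ψᵀ * X * S) = (Yᵀ * Ψᵀ * X) * S by noncomm_ring]
  have h1 : ((X * Yᵀ)ᵀ * (F * Gᵀ)).trace = S.trace := by
    rw [tr_eq]
    have : Yᵀ * (X * Yᵀ)ᵀ * X = 1 := by
      rw [transpose_mul, transpose_transpose,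
        show Yᵀ * (Y * Xᵀ) * X = (Yᵀ * Y) * (Xᵀ * X) by noncomm_ring, hY1, hX1, Matrix.one_mul]
    rw [this, Matrix.one_mul]
  have h2 : (Ωᵀ * (F * Gᵀ)).trace ≤ S.trace := by
    rw [tr_eq]
    apply trace_mul_diag_le _ _ _ hSdiag hSpos
    rw [transpose_mul, transpose_mul, transpose_transpose, transpose_transpose]
    calc Yᵀ * Ωᵀ * X * (Xᵀ * (Ω * Y)) = Yᵀ * (Ωᵀ * (X * Xᵀ) * Ω) * Y := by
          noncomm_ring
      _ = 1 := by rw [hX2, Matrix.mul_one, hΩ1, Matrix.mul_one, hY1]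
  rw [h1]
  nlinarith [h2]
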